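/- Let G be a finite simple graph on vertices {1,…,n} with adjacency matrix A over Z_2. Suppose vertex 1 is isolated. Then for every subset s containing 1, corank A(G(s)) = corank A(G(s\{1})) + 1, and consequently the Kauffman bracket factorizes: ⟨G⟩ = (ε a^{ε} + ε a^{−ε}(−a^2−a^{−2}))·⟨G\{1}⟩ up to the sign conventions, where ε = +1 if vertex 1 is labeled + and the factor equals −a^{−3}, and ε = −1 if labeled − with factor −a^{3}; here G\{1} is G with vertex 1 deleted and ⟨·⟩ is the graph Kauffman bracket. -/

import Mathlib

open Matrix LaurentPolynomial
open scoped Classical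

noncomputable section

def adjMatS {V : Type} (G : SimpleGraph V) (s : Finset V) : Matrix s s (ZMod 2) :=
  fun i j => if G.Adj i.1 j.1 then 1 else 0

def corankS {V : Type} (G : SimpleGraph V) (s : Finset V) : ℕ :=
  s.card - (adjMatS G s).rank

def adjMat {V : Type} [Fintype V] (G : SimpleGraph V) : Matrix V V (ZMod 2) :=
  fun i j => if G.Adj i j then 1 else 0

def corankM {m : Type} [Fintype m] (M : Matrix m m (ZMod 2)) : ℕ :=
  Fintype.card m - M.rank

def alphaCount {V : Type} [Fintype V] (σ : V → Bool) (s : Finset V) : ℕ :=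
  (s.filter (fun i => σ i = false)).card + ((sᶜ).filter (fun i => σ i = true)).card

def bracket {V : Type} [Fintype V] (G : SimpleGraph V) (σ : V → Bool) : LaurentPolynomial ℚ :=
  ∑ s : Finset V, T (2 * (alphaCount σ s : ℤ) - (Fintype.card V : ℤ)) *
    (-T 2 - T (-2)) ^ (corankS G s)

def lspan (p : LaurentPolynomial ℚ) : ℤ := (p.coeff.support.max.unbotD 0) - (p.coeff.support.min.untopD 0)

def Bmat {V : Type} [Fintype V] (G : SimpleGraph V) (x : V) : Matrix V V (ZMod 2) :=
  adjMat G + 1 + Matrix.single x x 1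

def writhe {V : Type} [Fintype V] (G : SimpleGraph V) (σ : V → Bool) : ℤ :=
  ∑ x, (-1 : ℤ) ^ (corankM (Bmat G x)) * (if σ x then 1 else -1)

def extAdj {V : Type} (G : SimpleGraph V) (N : Set V) : V ⊕ Bool → V ⊕ Bool → Prop
  | .inl i, .inl j => G.Adj i j
  | .inl i, .inr _ => i ∈ N
  | .inr _, .inl j => j ∈ N
  | .inr _, .inr _ => False

def ext2 {V : Type} (G : SimpleGraph V) (N : Set V) : SimpleGraph (V ⊕ Bool) where
  Adj := extAdj G N
  symm := by
    constructor
    rintro (i|b) (j|c) h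
    · exact G.adj_symm h
    · exact h
    · exact h
    · exact h
  loopless := by
    constructor
    rintro (i|b) h
    · exact G.loopless.irrefl _ h
    · exact h

def optExt {V : Type} (G : SimpleGraph V) : SimpleGraph (Option V) where
  Adj x y := match x, y with
    | some i, some j => G.Adj i j
    | _, _ => False
  symm := by
    constructor
    rintro (_|i) (_|j) h
    · exact h
    · exact h
    · exact h
    · exact G.adj_symm h
  loopless := by
    constructor
    rintro (_|i) h
    · exact h
    · exact G.loopless.irrefl _ h


-- ===== auxiliary lemmas =====

lemma rank_conj_eq {R : Type*} [Field R] {m n : Type} [Fintype m] [Fintype n]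
    (M : Matrix m m R) (N : Matrix n n R) (E : Matrix m n R)
    (h1 : M = E * N * Eᵀ) (h2 : N = Eᵀ * M * E) : M.rank = N.rank := by
  refine le_antisymm ?_ ?_
  · rw [h1]; exact le_trans (rank_mul_le_left _ _) (rank_mul_le_right _ _)
  · rw [h2]; exact le_trans (rank_mul_le_left _ _) (rank_mul_le_right _ _)

section AuxRank
variable {V : Type} {R : Type*} [Semiring R]

lemma dsum {t : Finset V} (w : V) (f : {x // x ∈ t} → R) :
    (∑ k : {x // x ∈ t}, (if w = (k:V) then (1:R) else 0) * f k)
      = if hm : w ∈ t then f ⟨w, hm⟩ else 0 := by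
  by_cases hm : w ∈ t
  · rw [dif_pos hm]
    rw [Finset.sum_eq_single (⟨w, hm⟩ : {x // x ∈ t})]
    · simp
    · intro k _ hk
      have : ¬(w = (k:V)) := fun h => hk (Subtype.ext h.symm)
      simp [this]
    · simp
  · rw [dif_neg hm]
    apply Finset.sum_eq_zero
    intro k _
    have : ¬(w = (k:V)) := fun h => hm (h ▸ k.2)
    simp [this]

lemma dsum' {t : Finset V} (w : V) (f : {x // x ∈ t} → R) :
    (∑ k : {x // x ∈ t}, (if (k:V) = w then (1:R) else 0) * f k)
      = if hm : w ∈ t then f ⟨w, hm⟩ else 0 := by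
  rw [← dsum w f]; congr 1; ext k; congr 1; simp [eq_comm]

lemma dsumr {t : Finset V} (w : V) (f : {x // x ∈ t} → R) :
    (∑ k : {x // x ∈ t}, f k * (if w = (k:V) then (1:R) else 0))
      = if hm : w ∈ t then f ⟨w, hm⟩ else 0 := by
  rw [← dsum w f]; congr 1; ext k
  by_cases h : w = (k:V) <;> simp [h]

lemma dsumr' {t : Finset V} (w : V) (f : {x // x ∈ t} → R) :
    (∑ k : {x // x ∈ t}, f k * (if (k:V) = w then (1:R) else 0))
      = if hm : w ∈ t then f ⟨w, hm⟩ else 0 := by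
  rw [← dsumr w f]; congr 1; ext k; congr 1; simp [eq_comm]

lemma rank_erase (G : SimpleGraph V) (v : V) (hiso : ∀ y, ¬ G.Adj v y)
    (s : Finset V) (hv : v ∈ s) :
    (adjMatS G s).rank = (adjMatS G (s.erase v)).rank := by
  set E : Matrix s (s.erase v : Finset V) (ZMod 2) :=
    Matrix.of (fun i j => if (i : V) = (j : V) then 1 else 0) with hE
  apply rank_conj_eq (adjMatS G s) (adjMatS G (s.erase v)) E
  · ext i j
    simp only [adjMatS, Matrix.mul_apply, Matrix.transpose_apply, hE, Matrix.of_apply]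
    rw [Finset.sum_congr rfl (fun x _ => by
      rw [dsum (i:V) (fun k => if G.Adj k.1 x.1 then (1:ZMod 2) else 0)])]
    rw [dsumr (j:V)]
    by_cases hi : (i:V) ∈ s.erase v
    · by_cases hj : (j:V) ∈ s.erase v
      · simp [hi, hj]
      · have hjv : (j:V) = v := by
          by_contra h; exact hj (Finset.mem_erase.2 ⟨h, j.2⟩)
        have : ¬ G.Adj i.1 j.1 := fun h => hiso i.1 (hjv ▸ h.symm)
        simp [hi, hj, this]
    · have hiv : (i:V) = v := by
        by_contra h; exact hi (Finset.mem_erase.2 ⟨h, i.2⟩)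
      have : ¬ G.Adj i.1 j.1 := hiv ▸ hiso j.1
      simp [hi, this]
  · ext k l
    simp only [adjMatS, Matrix.mul_apply, Matrix.transpose_apply, hE, Matrix.of_apply]
    have hk : (k:V) ∈ s := Finset.mem_of_mem_erase k.2
    have hl : (l:V) ∈ s := Finset.mem_of_mem_erase l.2
    rw [Finset.sum_congr rfl (fun x _ => by
      rw [dsum' (k:V) (fun y => if G.Adj y.1 x.1 then (1:ZMod 2) else 0)])]
    rw [dsumr' (l:V)]
    simp [hk, hl]

end AuxRank

section AuxKey
local notation "XX" => (-T 2 - T (-2) : LaurentPolynomial ℚ)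

lemma keyT (a : ℤ) (c : ℕ) :
    T (a+1) * XX ^ c + T (a-1) * XX ^ (c+1) = -T (-3) * (T a * XX ^ c) := by
  have h1 : (T (-1) : LaurentPolynomial ℚ) * T 2 = T 1 := by rw [← T_add]; norm_num
  have h2 : (T (-1) : LaurentPolynomial ℚ) * T (-2) = T (-3) := by rw [← T_add]; norm_num
  have h3 : (T (a+1) : LaurentPolynomial ℚ) = T a * T 1 := by rw [← T_add]
  have h4 : (T (a-1) : LaurentPolynomial ℚ) = T a * T (-1) := by rw [← T_add]; ring_nf
  rw [pow_succ, h3, h4]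
  linear_combination -(T a * XX ^ c) * h1 - (T a * XX ^ c) * h2

lemma keyF (a : ℤ) (c : ℕ) :
    T (a-1) * XX ^ c + T (a+1) * XX ^ (c+1) = -T 3 * (T a * XX ^ c) := by
  have h1 : (T (1:ℤ) : LaurentPolynomial ℚ) * T 2 = T 3 := by rw [← T_add]; norm_num
  have h2 : (T (1:ℤ) : LaurentPolynomial ℚ) * T (-2) = T (-1) := by rw [← T_add]; norm_num
  have h3 : (T (a+1) : LaurentPolynomial ℚ) = T a * T 1 := by rw [← T_add]
  have h4 : (T (a-1) : LaurentPolynomial ℚ) = T a * T (-1) := by rw [← T_add]; ring_nf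
  rw [pow_succ, h3, h4]
  linear_combination -(T a * XX ^ c) * h1 - (T a * XX ^ c) * h2

end AuxKey

section AuxComb
variable {V : Type} [Fintype V] (v : V)

def delEmb : ↥({x : V | x ≠ v}) ↪ V := Function.Embedding.subtype _

omit [Fintype V] in
lemma not_mem_map (t : Finset ↥({x : V | x ≠ v})) : v ∉ t.map (delEmb v) := by
  intro h
  obtain ⟨a, -, ha⟩ := Finset.mem_map.1 h
  exact a.2 ha

lemma card_S : Fintype.card ↥({x : V | x ≠ v}) + 1 = Fintype.card V := by
  have e1 : ↥({x : V | x ≠ v}) ≃ {b : V // b ≠ v} := Equiv.subtypeEquivRight (fun x => Iff.rfl)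
  rw [Fintype.card_congr e1, ← Fintype.card_option,
    Fintype.card_congr (Equiv.optionSubtypeNe v)]

def toFinsetV (t : Finset ↥({x : V | x ≠ v})) (b : Bool) : Finset V :=
  if b then insert v (t.map (delEmb v)) else t.map (delEmb v)

omit [Fintype V] in
lemma subtype_map_eq (t : Finset ↥({x : V | x ≠ v})) :
    (t.map (delEmb v)).subtype (fun x => x ∈ {x : V | x ≠ v}) = t := by
  ext x
  simp only [Finset.mem_subtype, Finset.mem_map, delEmb, Function.Embedding.coe_subtype]
  constructor
  · rintro ⟨a, ha, hax⟩
    have : a = x := Subtype.ext hax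
    exact this ▸ ha
  · intro hx
    exact ⟨x, hx, rfl⟩

def stateEquiv : Finset ↥({x : V | x ≠ v}) × Bool ≃ Finset V where
  toFun p := toFinsetV v p.1 p.2
  invFun s := ((s.erase v).subtype (fun x => x ∈ {x : V | x ≠ v}), v ∈ s)
  left_inv := by
    rintro ⟨t, b⟩
    have h1 : (toFinsetV v t b).erase v = t.map (delEmb v) := by
      cases b <;> simp [toFinsetV, Finset.erase_insert (not_mem_map v t),
        Finset.erase_eq_of_notMem (not_mem_map v t)]
    have h2 : (v ∈ toFinsetV v t b) = (b = true) := by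
      cases b <;> simp [toFinsetV, not_mem_map v t]
    refine Prod.ext ?_ ?_
    · show ((toFinsetV v t b).erase v).subtype _ = t
      rw [h1, subtype_map_eq]
    · show (decide (v ∈ toFinsetV v t b)) = b
      cases b <;> simp [h2]
  right_inv := by
    intro s
    have h3 : (((s.erase v).subtype (fun x => x ∈ {x : V | x ≠ v})).map (delEmb v)) = s.erase v := by
      rw [delEmb, Finset.subtype_map]
      exact Finset.filter_true_of_mem (fun x hx => (Finset.mem_erase.1 hx).1)
    by_cases hv : v ∈ s
    · show toFinsetV v _ _ = s
      unfold toFinsetV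
      dsimp only
      rw [if_pos (by simpa using hv), h3, Finset.insert_erase hv]
    · show toFinsetV v _ _ = s
      unfold toFinsetV
      dsimp only
      rw [if_neg (by simpa using hv), h3, Finset.erase_eq_of_notMem hv]

omit [Fintype V] in
lemma compl_map [Fintype V] (t : Finset ↥({x : V | x ≠ v})) :
    (t.map (delEmb v))ᶜ = insert v (tᶜ.map (delEmb v)) := by
  ext x
  by_cases hx : x = v
  · subst hx
    simp only [Finset.mem_compl, Finset.mem_insert, true_or, iff_true]
    exact not_mem_map x t
  · have hxS : x ∈ {x : V | x ≠ v} := hx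
    simp only [Finset.mem_compl, Finset.mem_insert, hx, false_or, Finset.mem_map,
      delEmb, Function.Embedding.coe_subtype]
    constructor
    · intro h
      exact ⟨⟨x, hxS⟩, by simpa using fun h' => h ⟨⟨x, hxS⟩, h', rfl⟩, rfl⟩
    · rintro ⟨a, ha, rfl⟩ ⟨b, hb, hba⟩
      have : b = a := Subtype.ext hba
      exact ha (this ▸ hb)

lemma alpha_del (σ : V → Bool) (t : Finset ↥({x : V | x ≠ v})) :
    alphaCount σ (t.map (delEmb v)) =
      alphaCount (fun x => σ x.1) t + (if σ v then 1 else 0) := by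
  unfold alphaCount
  rw [compl_map, Finset.filter_insert]
  by_cases hσ : σ v
  · rw [if_pos (by simp [hσ]),
      Finset.card_insert_of_notMem (fun h => not_mem_map v tᶜ (Finset.mem_of_mem_filter v h)),
      Finset.filter_map, Finset.filter_map, Finset.card_map, Finset.card_map]
    simp [Function.comp_def, hσ, delEmb]
    try ring_nf
    congr! <;> try exact Subsingleton.elim _ _
  · rw [if_neg (by simp [hσ]),
      Finset.filter_map, Finset.filter_map, Finset.card_map, Finset.card_map]
    simp [Function.comp_def, hσ, delEmb]
    try ring_nf
    congr! <;> try exact Subsingleton.elim _ _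

lemma alpha_ins (σ : V → Bool) (t : Finset ↥({x : V | x ≠ v})) :
    alphaCount σ (insert v (t.map (delEmb v))) =
      alphaCount (fun x => σ x.1) t + (if σ v then 0 else 1) := by
  unfold alphaCount
  have hc : (insert v (t.map (delEmb v)))ᶜ = tᶜ.map (delEmb v) := by
    rw [Finset.compl_insert, compl_map, Finset.erase_insert (not_mem_map v tᶜ)]
  rw [hc, Finset.filter_insert]
  by_cases hσ : σ v
  · rw [if_neg (by simp [hσ]),
      Finset.filter_map, Finset.filter_map, Finset.card_map, Finset.card_map]
    simp [Function.comp_def, hσ, delEmb]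
    try ring_nf
    congr! <;> try exact Subsingleton.elim _ _
  · rw [if_pos (by simp [hσ]),
      Finset.card_insert_of_notMem (fun h => not_mem_map v t (Finset.mem_of_mem_filter v h)),
      Finset.filter_map, Finset.filter_map, Finset.card_map, Finset.card_map]
    simp [Function.comp_def, hσ, delEmb]
    try ring_nf
    congr! <;> try exact Subsingleton.elim _ _

omit [Fintype V] in
lemma rank_induce (G : SimpleGraph V) (t : Finset ↥({x : V | x ≠ v})) :
    (adjMatS (G.induce {x : V | x ≠ v}) t).rank = (adjMatS G (t.map (delEmb v))).rank := by
  have hf : Function.Bijective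
      (fun x : ↥t => (⟨delEmb v x.1, Finset.mem_map_of_mem _ x.2⟩ : ↥(t.map (delEmb v)))) := by
    constructor
    · intro x y h
      simp only [Subtype.mk.injEq] at h
      exact Subtype.ext ((delEmb v).injective h)
    · intro y
      obtain ⟨a, ha, hay⟩ := Finset.mem_map.1 y.2
      exact ⟨⟨a, ha⟩, Subtype.ext hay⟩
  have heq : adjMatS (G.induce {x : V | x ≠ v}) t =
      (adjMatS G (t.map (delEmb v))).submatrix (Equiv.ofBijective _ hf) (Equiv.ofBijective _ hf) := by
    ext i j
    rfl
  rw [heq, Matrix.rank_submatrix]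

lemma corank_map (G : SimpleGraph V) (t : Finset ↥({x : V | x ≠ v})) :
    corankS G (t.map (delEmb v)) = corankS (G.induce {x : V | x ≠ v}) t := by
  unfold corankS
  rw [Finset.card_map, rank_induce]

end AuxComb

/-- If `v` is an isolated vertex of `G`, then for every state containing `v`
the corank goes up by one, and the Kauffman bracket factorizes as
⟨G⟩ = -a^{-3}⟨G∖v⟩ if `v` is labeled `+`, and ⟨G⟩ = -a³⟨G∖v⟩ if labeled `-`. -/
theorem bracket_factor_isolated {V : Type} [Fintype V] (G : SimpleGraph V)
    (σ : V → Bool) (v : V) (hiso : ∀ y, ¬ G.Adj v y) :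
    (∀ s : Finset V, v ∈ s → corankS G s = corankS G (s.erase v) + 1) ∧
    bracket G σ =
      (if σ v then -T (-3) else -T 3) *
        bracket (G.induce {x | x ≠ v}) (fun x => σ x.1) := by
  have part1 : ∀ s : Finset V, v ∈ s → corankS G s = corankS G (s.erase v) + 1 := by
    intro s hv
    unfold corankS
    rw [rank_erase G v hiso s hv, ← Finset.card_erase_add_one hv]
    have hr := Matrix.rank_le_card_width (adjMatS G (s.erase v))
    rw [Fintype.card_coe] at hr
    omega
  refine ⟨part1, ?_⟩
  rw [bracket, bracket, Finset.mul_sum,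
    ← Equiv.sum_comp (stateEquiv v) (fun s => T (2 * (alphaCount σ s : ℤ) - (Fintype.card V : ℤ)) *
      (-T 2 - T (-2)) ^ (corankS G s)), Fintype.sum_prod_type]
  refine Finset.sum_congr rfl (fun t _ => ?_)
  rw [Fintype.sum_bool]
  have hins : stateEquiv v (t, true) = insert v (t.map (delEmb v)) := rfl
  have hdel : stateEquiv v (t, false) = t.map (delEmb v) := rfl
  have hc2 : corankS G (t.map (delEmb v)) = corankS (G.induce {x : V | x ≠ v}) t :=
    corank_map v G t
  have hc1 : corankS G (insert v (t.map (delEmb v))) = corankS (G.induce {x : V | x ≠ v}) t + 1 := by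
    rw [part1 _ (Finset.mem_insert_self v _), Finset.erase_insert (not_mem_map v t), hc2]
  simp only [hins, hdel]
  rw [alpha_ins, alpha_del, hc1, hc2, ← card_S v]
  set n' : ℕ := Fintype.card ↥({x : V | x ≠ v})
  set α' : ℕ := alphaCount (fun x => σ x.1) t
  set c : ℕ := corankS (G.induce {x : V | x ≠ v}) t
  by_cases hσ : σ v
  · simp only [hσ, if_true]
    have e1 : (2 * ((α' + 0 : ℕ) : ℤ) - ((n' + 1 : ℕ) : ℤ)) = (2 * (α' : ℤ) - (n' : ℤ)) - 1 := by
      push_cast; ring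
    have e2 : (2 * ((α' + 1 : ℕ) : ℤ) - ((n' + 1 : ℕ) : ℤ)) = (2 * (α' : ℤ) - (n' : ℤ)) + 1 := by
      push_cast; ring
    rw [e1, e2, add_comm]
    exact keyT _ c
  · rw [Bool.not_eq_true] at hσ
    simp only [hσ, Bool.false_eq_true, if_false]
    have e1 : (2 * ((α' + 1 : ℕ) : ℤ) - ((n' + 1 : ℕ) : ℤ)) = (2 * (α' : ℤ) - (n' : ℤ)) + 1 := by
      push_cast; ring
    have e2 : (2 * ((α' + 0 : ℕ) : ℤ) - ((n' + 1 : ℕ) : ℤ)) = (2 * (α' : ℤ) - (n' : ℤ)) - 1 := by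
      push_cast; ring
    rw [e1, e2, add_comm]
    exact keyF _ c
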